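/- Define φ : [0,∞) → ℝ by φ(ν) := sup_{x ∈ (0,1]} 2^{1−x}·(1 + ν/x)^x. Then φ(ν) ≤ ν + 2 for every ν ≥ 0, and φ(ν) = ν + 1 for every ν ≥ 3.5. -/

import Mathlib

open Real

lemma log94 : (7:ℝ)/9 ≤ Real.log (9/4) := by
  rw [Real.le_log_iff_exp_le (by norm_num)]
  have h9 : Real.exp (7/9) ^ 9 = Real.exp 1 ^ 7 := by
    rw [← Real.exp_nat_mul, Real.exp_one_pow]
    norm_num
  have he : Real.exp 1 < 2.7182818286 := Real.exp_one_lt_d9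
  have : Real.exp (7/9) ^ 9 ≤ (9/4:ℝ) ^ 9 := by
    rw [h9]
    calc Real.exp 1 ^ 7 ≤ (2.7182818286:ℝ) ^ 7 := by
          apply pow_le_pow_left₀ (Real.exp_pos 1).le he.le
      _ ≤ (9/4:ℝ)^9 := by norm_num
  exact le_of_pow_le_pow_left₀ (by norm_num) (by norm_num) this

lemma logc (c : ℝ) (hc : (9:ℝ)/4 ≤ c) : 2*c - 1 ≤ 2*c*Real.log c := by
  have hc0 : (0:ℝ) < c := by linarith
  have h1 : Real.log c = Real.log (9/4) + Real.log (4*c/9) := by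
    rw [← Real.log_mul (by norm_num) (by positivity)]
    ring_nf
  have h2 : 1 - 1/(4*c/9) ≤ Real.log (4*c/9) := by
    have := Real.log_le_sub_one_of_pos (x := (4*c/9)⁻¹) (by positivity)
    rw [Real.log_inv] at this
    rw [one_div]
    linarith
  have h3 : (7:ℝ)/9 ≤ Real.log (9/4) := log94
  have h4 : 1/(4*c/9) = 9/(4*c) := by field_simp
  rw [h4] at h2
  have h5 : 7/9 + 1 - 9/(4*c) ≤ Real.log c := by rw [h1]; linarith
  have h6 : 9/(4*c) ≤ 1 := by
    rw [div_le_one (by positivity)]; linarith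
  have hh : 2*c*(9/(4*c)) = 9/2 := by field_simp; ring
  nlinarith [mul_le_mul_of_nonneg_left h5 (by linarith : (0:ℝ) ≤ 2*c), hh]

lemma key_bound (ν x : ℝ) (hν : (3.5:ℝ) ≤ ν) (hx : 0 < x) (hx1 : x ≤ 1) :
    (2:ℝ) ^ (1 - x) * (1 + ν / x) ^ x ≤ ν + 1 := by
  set c : ℝ := (ν + 1)/2 with hc
  have hc94 : (9:ℝ)/4 ≤ c := by rw [hc]; linarith
  have hc0 : (0:ℝ) < c := by linarith
  have hy1 : 1 ≤ 1/x := (le_div_iff₀ hx).2 (by linarith)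
  -- c^(1/x) ≥ c * (1 + (1/x - 1) * log c)
  have hexp : c * (1 + (1/x - 1) * Real.log c) ≤ c ^ (1/x : ℝ) := by
    have : c ^ (1/x : ℝ) = c ^ (1:ℝ) * c ^ (1/x - 1 : ℝ) := by
      rw [← Real.rpow_add hc0]; ring_nf
    rw [this, Real.rpow_one]
    have h1 : c ^ (1/x - 1 : ℝ) = Real.exp ((1/x - 1) * Real.log c) := by
      rw [Real.rpow_def_of_pos hc0, mul_comm]
    rw [h1]
    have := Real.add_one_le_exp ((1/x - 1) * Real.log c)
    nlinarith
  -- 1 + ν/x ≤ 2 * c^(1/x)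
  have hlogc := logc c hc94
  have hA : 1 + ν/x ≤ 2 * c ^ (1/x : ℝ) := by
    have h2 : 2*c + (2*c - 1)*(1/x - 1) ≤ 2 * (c * (1 + (1/x - 1) * Real.log c)) := by
      nlinarith [mul_le_mul_of_nonneg_right hlogc (by linarith : (0:ℝ) ≤ 1/x - 1)]
    have h3 : ν/x = (2*c - 1) * (1/x) := by rw [hc]; field_simp; ring
    have h4 : 1 + ν/x = 2*c + (2*c-1)*(1/x - 1) := by rw [h3, hc]; ring
    linarith
  -- raise to power x
  have h0 : (0:ℝ) ≤ 1 + ν/x := by positivity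
  have h5 : (1 + ν/x) ^ x ≤ (2 * c ^ (1/x:ℝ)) ^ x := Real.rpow_le_rpow h0 hA hx.le
  have h6 : ((2:ℝ) * c ^ (1/x:ℝ)) ^ x = 2 ^ x * c := by
    rw [Real.mul_rpow (by norm_num) (by positivity)]
    congr 1
    rw [one_div, Real.rpow_inv_rpow hc0.le hx.ne']
  have h7 : (2:ℝ) ^ (1-x) * (2 ^ x * c) = 2 * c := by
    rw [← mul_assoc, ← Real.rpow_add (by norm_num : (0:ℝ) < 2)]
    norm_num
  have h8 : (2:ℝ)^(1-x) * (1+ν/x)^x ≤ 2^(1-x) * (2^x * c) := by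
    apply mul_le_mul_of_nonneg_left _ (Real.rpow_nonneg (by norm_num) _)
    rw [← h6]; exact h5
  rw [h7] at h8
  have : 2 * c = ν + 1 := by rw [hc]; ring
  linarith

theorem phi_bounds (φ : ℝ → ℝ)
    (hφ : ∀ ν : ℝ, φ ν =
      sSup ((fun x : ℝ => (2 : ℝ) ^ (1 - x) * (1 + ν / x) ^ x) '' Set.Ioc 0 1)) :
    (∀ ν : ℝ, 0 ≤ ν → φ ν ≤ ν + 2) ∧ (∀ ν : ℝ, (3.5 : ℝ) ≤ ν → φ ν = ν + 1) := by
  constructor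
  · intro ν hν
    rw [hφ]
    apply Real.sSup_le _ (by linarith)
    rintro y ⟨x, ⟨hx0, hx1⟩, rfl⟩
    have h := Real.geom_mean_le_arith_mean2_weighted (by linarith : (0:ℝ) ≤ 1 - x)
      (le_of_lt hx0) (by norm_num : (0:ℝ) ≤ 2) (by positivity : (0:ℝ) ≤ 1 + ν/x)
      (by ring)
    have : x * (1 + ν/x) = x + ν := by field_simp
    simp only [this] at h
    nlinarith
  · intro ν hν
    have hmem : ν + 1 ∈ ((fun x : ℝ => (2 : ℝ) ^ (1 - x) * (1 + ν / x) ^ x) '' Set.Ioc 0 1) := by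
      refine ⟨1, ⟨one_pos, le_refl 1⟩, ?_⟩
      simp [Real.rpow_one]
      ring
    rw [hφ]
    apply le_antisymm
    · apply Real.sSup_le _ (by linarith)
      rintro y ⟨x, ⟨hx0, hx1⟩, rfl⟩
      exact key_bound ν x hν hx0 hx1
    · apply le_csSup ⟨ν + 1, ?_⟩ hmem
      rintro y ⟨x, ⟨hx0, hx1⟩, rfl⟩
      exact key_bound ν x hν hx0 hx1
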